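/- Let μ, σ, δ, γ > 0 and ρ ∈ (0,1), with λ₁ = (−μ − √(μ² + 2σ²δ))/σ², λ₂ = (−μ + √(μ² + 2σ²δ))/σ², λ₃ = (−μ − √(μ² + 2σ²(δ+γ)))/σ², λ₄ = (−μ + √(μ² + 2σ²(δ+γ)))/σ², and let q > 0 and m̄ > 0. Suppose b, F : [0, m̄] → ℝ are twice continuously differentiable, satisfy for all m ∈ [0, m̄] the ODE system X₁₁(m,b(m),F(m))·b'(m) + X₁₂(m,b(m))·F'(m) = R₁(m,b(m)) and X₂₁(m,b(m),F(m))·b'(m) + X₂₂(m,b(m))·F'(m) = R₂(m,b(m)), with initial conditions G(b(0)) = 0 and F(0) = ρ·N₁(b(0))/D₁(b(0)), and suppose X₁₁(m,b(m),F(m))·X₂₂(m,b(m)) − X₂₁(m,b(m),F(m))·X₁₂(m,b(m)) > 0 for all m ∈ [0, m̄]. Then: (a) b'(0) = 0; (b) there exists ε ∈ (0, m̄] such that b''(m) < 0 for all m ∈ [0, ε) (b is concave in a right-neighborhood of 0); (c) b'(m) ≤ 0 for all m ∈ [0, m̄], i.e., the dividend boundary b is nonincreasing. -/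

import Mathlib

/-- `D(α,β,b) = βe^{−αb} − αe^{−βb}`. -/
noncomputable def Dden (α β b : ℝ) : ℝ :=
  β * Real.exp (-α * b) - α * Real.exp (-β * b)

/-- `N(α,β,b) = β²e^{−αb} − α²e^{−βb}`. -/
noncomputable def Nnum (α β b : ℝ) : ℝ :=
  β ^ 2 * Real.exp (-α * b) - α ^ 2 * Real.exp (-β * b)

/-- `G(b) = ρ·N₁(b)/D₁(b) + (1−ρ)·N₂(b)/D₂(b)`. -/
noncomputable def Gfun (l1 l2 l3 l4 ρ b : ℝ) : ℝ :=
  ρ * (Nnum l1 l2 b / Dden l1 l2 b) + (1 - ρ) * (Nnum l3 l4 b / Dden l3 l4 b)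

/-- `X₁₁(m,b,F)`. -/
noncomputable def X11 (l1 l2 ρ q m b F : ℝ) : ℝ :=
  l1 * l2 * (ρ * Real.exp (-q * m) *
      (l1 * Real.exp (l2 * (m - b)) - l2 * Real.exp (l1 * (m - b))) +
    (Real.exp (l1 * (m - b)) - Real.exp (l2 * (m - b))) * F)

/-- `X₁₂(m,b)`. -/
noncomputable def X12 (l1 l2 m b : ℝ) : ℝ :=
  l1 * Real.exp (l2 * (m - b)) - l2 * Real.exp (l1 * (m - b))

/-- `X₂₁(m,b,F)`. -/
noncomputable def X21 (l3 l4 ρ q m b F : ℝ) : ℝ :=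
  l3 * l4 * ((1 - ρ) * Real.exp (-q * m) *
      (l3 * Real.exp (l4 * (m - b)) - l4 * Real.exp (l3 * (m - b))) -
    (Real.exp (l3 * (m - b)) - Real.exp (l4 * (m - b))) * F)

/-- `X₂₂(m,b)`. -/
noncomputable def X22 (l3 l4 m b : ℝ) : ℝ :=
  l4 * Real.exp (l3 * (m - b)) - l3 * Real.exp (l4 * (m - b))

/-- `R₁(m,b)`. -/
noncomputable def R1 (l1 l2 ρ q m b : ℝ) : ℝ :=
  ρ * q * Real.exp (-q * m) *
    (l2 ^ 2 * Real.exp (l1 * (m - b)) - l1 ^ 2 * Real.exp (l2 * (m - b)))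

/-- `R₂(m,b)`. -/
noncomputable def R2 (l3 l4 ρ q m b : ℝ) : ℝ :=
  (1 - ρ) * q * Real.exp (-q * m) *
    (l4 ^ 2 * Real.exp (l3 * (m - b)) - l3 ^ 2 * Real.exp (l4 * (m - b)))

lemma hasDerivAt_expc (c b : ℝ) :
    HasDerivAt (fun x => Real.exp (c * x)) (c * Real.exp (c * b)) b := by
  have : HasDerivAt (fun x : ℝ => c * x) (c * 1) b := (hasDerivAt_id b).const_mul c
  simpa [mul_comm] using this.exp

lemma Dden_pos {α β : ℝ} (hα : α < 0) (hβ : 0 < β) (b : ℝ) : 0 < Dden α β b := by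
  have h1 : 0 < β * Real.exp (-α * b) := by positivity
  have h2 : 0 < (-α) * Real.exp (-β * b) := by
    have := Real.exp_pos (-β * b); nlinarith
  unfold Dden; nlinarith

lemma hasDerivAt_Dden (α β b : ℝ) :
    HasDerivAt (Dden α β) (α * β * (Real.exp (-β * b) - Real.exp (-α * b))) b := by
  have h1 : HasDerivAt (fun x => β * Real.exp (-α * x)) (β * ((-α) * Real.exp (-α * b))) b := by
    have := hasDerivAt_expc (-α) b
    simpa [mul_comm, mul_left_comm] using this.const_mul β
  have h2 : HasDerivAt (fun x => α * Real.exp (-β * x)) (α * ((-β) * Real.exp (-β * b))) b := by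
    have := hasDerivAt_expc (-β) b
    simpa [mul_comm, mul_left_comm] using this.const_mul α
  have := h1.sub h2
  have heq : ((fun x => β * Real.exp (-α * x)) - fun x => α * Real.exp (-β * x)) = Dden α β := by
    funext x; rfl
  rw [heq] at this
  exact this.congr_deriv (by ring)

lemma hasDerivAt_Nnum (α β b : ℝ) :
    HasDerivAt (Nnum α β) (-(α * β) * Dden α β b) b := by
  have h1 : HasDerivAt (fun x => β ^ 2 * Real.exp (-α * x)) (β ^ 2 * ((-α) * Real.exp (-α * b))) b := by
    have := hasDerivAt_expc (-α) b
    simpa [mul_comm, mul_left_comm] using this.const_mul (β ^ 2)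
  have h2 : HasDerivAt (fun x => α ^ 2 * Real.exp (-β * x)) (α ^ 2 * ((-β) * Real.exp (-β * b))) b := by
    have := hasDerivAt_expc (-β) b
    simpa [mul_comm, mul_left_comm] using this.const_mul (α ^ 2)
  have := h1.sub h2
  exact HasDerivAt.congr_deriv (f := Nnum α β) this (by unfold Dden; ring)

lemma hasDerivAt_ratio {α β : ℝ} (hα : α < 0) (hβ : 0 < β) (b : ℝ) :
    HasDerivAt (fun x => Nnum α β x / Dden α β x)
      (-(α * β) * (α - β) ^ 2 * Real.exp (-α * b) * Real.exp (-β * b) / (Dden α β b) ^ 2) b := by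
  have hD := Dden_pos hα hβ b
  have h := (hasDerivAt_Nnum α β b).div (hasDerivAt_Dden α β b) hD.ne'
  refine h.congr_deriv ?_
  rw [div_eq_div_iff (by positivity) (by positivity)]
  unfold Dden Nnum
  ring

lemma hasDerivAt_Gfun {l1 l2 l3 l4 : ℝ} (ρ : ℝ) (h1 : l1 < 0) (h2 : 0 < l2)
    (h3 : l3 < 0) (h4 : 0 < l4) (b : ℝ) :
    HasDerivAt (Gfun l1 l2 l3 l4 ρ)
      (ρ * (-(l1 * l2) * (l1 - l2) ^ 2 * Real.exp (-l1 * b) * Real.exp (-l2 * b) / (Dden l1 l2 b) ^ 2)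
      + (1 - ρ) * (-(l3 * l4) * (l3 - l4) ^ 2 * Real.exp (-l3 * b) * Real.exp (-l4 * b) / (Dden l3 l4 b) ^ 2)) b := by
  exact ((hasDerivAt_ratio h1 h2 b).const_mul ρ).add ((hasDerivAt_ratio h3 h4 b).const_mul (1 - ρ))

lemma Gfun_deriv_pos {l1 l2 l3 l4 ρ : ℝ} (h1 : l1 < 0) (h2 : 0 < l2)
    (h3 : l3 < 0) (h4 : 0 < l4) (hρ0 : 0 < ρ) (hρ1 : ρ < 1) (b : ℝ) :
    0 < ρ * (-(l1 * l2) * (l1 - l2) ^ 2 * Real.exp (-l1 * b) * Real.exp (-l2 * b) / (Dden l1 l2 b) ^ 2)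
      + (1 - ρ) * (-(l3 * l4) * (l3 - l4) ^ 2 * Real.exp (-l3 * b) * Real.exp (-l4 * b) / (Dden l3 l4 b) ^ 2) := by
  have hD1 := Dden_pos h1 h2 b
  have hD2 := Dden_pos h3 h4 b
  have e1 := Real.exp_pos (-l1 * b); have e2 := Real.exp_pos (-l2 * b)
  have e3 := Real.exp_pos (-l3 * b); have e4 := Real.exp_pos (-l4 * b)
  have k1 : 0 < -(l1 * l2) := by nlinarith
  have k3 : 0 < -(l3 * l4) := by nlinarith
  have q1 : (0:ℝ) < (l1 - l2) ^ 2 := by nlinarith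
  have q3 : (0:ℝ) < (l3 - l4) ^ 2 := by nlinarith
  have t1 : 0 < ρ * (-(l1 * l2) * (l1 - l2) ^ 2 * Real.exp (-l1 * b) * Real.exp (-l2 * b) / (Dden l1 l2 b) ^ 2) :=
    mul_pos hρ0 (div_pos (mul_pos (mul_pos (mul_pos k1 q1) e1) e2) (pow_pos hD1 2))
  have t2 : 0 < (1 - ρ) * (-(l3 * l4) * (l3 - l4) ^ 2 * Real.exp (-l3 * b) * Real.exp (-l4 * b) / (Dden l3 l4 b) ^ 2) :=
    mul_pos (by linarith) (div_pos (mul_pos (mul_pos (mul_pos k3 q3) e3) e4) (pow_pos hD2 2))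
  linarith

lemma Gfun_strictMono {l1 l2 l3 l4 ρ : ℝ} (h1 : l1 < 0) (h2 : 0 < l2)
    (h3 : l3 < 0) (h4 : 0 < l4) (hρ0 : 0 < ρ) (hρ1 : ρ < 1) :
    StrictMono (Gfun l1 l2 l3 l4 ρ) := by
  exact strictMono_of_hasDerivAt_pos (fun b => hasDerivAt_Gfun ρ h1 h2 h3 h4 b)
    (fun b => Gfun_deriv_pos h1 h2 h3 h4 hρ0 hρ1 b)

lemma key_id (l1 l2 l3 l4 ρ q m bv : ℝ) :
    R1 l1 l2 ρ q m bv * X22 l3 l4 m bv - R2 l3 l4 ρ q m bv * X12 l1 l2 m bv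
      = q * Real.exp (-q * m) *
        (ρ * Nnum l1 l2 (bv - m) * Dden l3 l4 (bv - m)
          + (1 - ρ) * Nnum l3 l4 (bv - m) * Dden l1 l2 (bv - m)) := by
  unfold R1 R2 X22 X12 Nnum Dden
  rw [show l1 * (m - bv) = -l1 * (bv - m) by ring, show l2 * (m - bv) = -l2 * (bv - m) by ring,
    show l3 * (m - bv) = -l3 * (bv - m) by ring, show l4 * (m - bv) = -l4 * (bv - m) by ring]
  ring

lemma Phi_eq {l1 l2 l3 l4 : ℝ} (ρ : ℝ) (h1 : l1 < 0) (h2 : 0 < l2) (h3 : l3 < 0) (h4 : 0 < l4)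
    (v : ℝ) :
    ρ * Nnum l1 l2 v * Dden l3 l4 v + (1 - ρ) * Nnum l3 l4 v * Dden l1 l2 v
      = Dden l1 l2 v * Dden l3 l4 v * Gfun l1 l2 l3 l4 ρ v := by
  have hD1 := (Dden_pos h1 h2 v).ne'
  have hD2 := (Dden_pos h3 h4 v).ne'
  unfold Gfun
  field_simp


set_option maxHeartbeats 2000000 in
/-- Monotonicity and local concavity of the free dividend boundary `b`:
`b'(0) = 0`, `b'' < 0` near `0`, and `b' ≤ 0` on `[0, m̄]`. -/
theorem stmt13 (μ σ δ γ ρ q mbar l1 l2 l3 l4 : ℝ)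
    (hμ : 0 < μ) (hσ : 0 < σ) (hδ : 0 < δ) (hγ : 0 < γ)
    (hρ : ρ ∈ Set.Ioo (0:ℝ) 1) (hq : 0 < q) (hmbar : 0 < mbar)
    (hl1 : l1 = (-μ - Real.sqrt (μ ^ 2 + 2 * σ ^ 2 * δ)) / σ ^ 2)
    (hl2 : l2 = (-μ + Real.sqrt (μ ^ 2 + 2 * σ ^ 2 * δ)) / σ ^ 2)
    (hl3 : l3 = (-μ - Real.sqrt (μ ^ 2 + 2 * σ ^ 2 * (δ + γ))) / σ ^ 2)
    (hl4 : l4 = (-μ + Real.sqrt (μ ^ 2 + 2 * σ ^ 2 * (δ + γ))) / σ ^ 2)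
    (b F b' F' b'' F'' : ℝ → ℝ)
    (hbd : ∀ m ∈ Set.Icc (0:ℝ) mbar,
      HasDerivWithinAt b (b' m) (Set.Icc (0:ℝ) mbar) m)
    (hFd : ∀ m ∈ Set.Icc (0:ℝ) mbar,
      HasDerivWithinAt F (F' m) (Set.Icc (0:ℝ) mbar) m)
    (hbd2 : ∀ m ∈ Set.Icc (0:ℝ) mbar,
      HasDerivWithinAt b' (b'' m) (Set.Icc (0:ℝ) mbar) m)
    (hFd2 : ∀ m ∈ Set.Icc (0:ℝ) mbar,
      HasDerivWithinAt F' (F'' m) (Set.Icc (0:ℝ) mbar) m)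
    (hb2c : ContinuousOn b'' (Set.Icc (0:ℝ) mbar))
    (hF2c : ContinuousOn F'' (Set.Icc (0:ℝ) mbar))
    (hode1 : ∀ m ∈ Set.Icc (0:ℝ) mbar,
      X11 l1 l2 ρ q m (b m) (F m) * b' m + X12 l1 l2 m (b m) * F' m =
        R1 l1 l2 ρ q m (b m))
    (hode2 : ∀ m ∈ Set.Icc (0:ℝ) mbar,
      X21 l3 l4 ρ q m (b m) (F m) * b' m + X22 l3 l4 m (b m) * F' m =
        R2 l3 l4 ρ q m (b m))
    (hG0 : Gfun l1 l2 l3 l4 ρ (b 0) = 0)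
    (hF0 : F 0 = ρ * Nnum l1 l2 (b 0) / Dden l1 l2 (b 0))
    (hdet : ∀ m ∈ Set.Icc (0:ℝ) mbar,
      0 < X11 l1 l2 ρ q m (b m) (F m) * X22 l3 l4 m (b m) -
          X21 l3 l4 ρ q m (b m) (F m) * X12 l1 l2 m (b m)) :
    b' 0 = 0 ∧
    (∃ ε : ℝ, 0 < ε ∧ ε ≤ mbar ∧ ∀ m ∈ Set.Ico (0:ℝ) ε, b'' m < 0) ∧
    (∀ m ∈ Set.Icc (0:ℝ) mbar, b' m ≤ 0) := by
  obtain ⟨hρ0, hρ1⟩ := hρ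
  have hσ2 : (0:ℝ) < σ ^ 2 := by positivity
  have hs1 : μ < Real.sqrt (μ ^ 2 + 2 * σ ^ 2 * δ) := by
    have h := Real.sqrt_lt_sqrt (by positivity : (0:ℝ) ≤ μ ^ 2)
      (by nlinarith : μ ^ 2 < μ ^ 2 + 2 * σ ^ 2 * δ)
    rwa [Real.sqrt_sq hμ.le] at h
  have hs2 : μ < Real.sqrt (μ ^ 2 + 2 * σ ^ 2 * (δ + γ)) := by
    have h := Real.sqrt_lt_sqrt (by positivity : (0:ℝ) ≤ μ ^ 2)
      (by nlinarith : μ ^ 2 < μ ^ 2 + 2 * σ ^ 2 * (δ + γ))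
    rwa [Real.sqrt_sq hμ.le] at h
  have h1n : l1 < 0 := by
    rw [hl1]; apply div_neg_of_neg_of_pos _ hσ2
    have := Real.sqrt_nonneg (μ ^ 2 + 2 * σ ^ 2 * δ); linarith
  have h2p : 0 < l2 := by rw [hl2]; apply div_pos _ hσ2; linarith
  have h3n : l3 < 0 := by
    rw [hl3]; apply div_neg_of_neg_of_pos _ hσ2
    have := Real.sqrt_nonneg (μ ^ 2 + 2 * σ ^ 2 * (δ + γ)); linarith
  have h4p : 0 < l4 := by rw [hl4]; apply div_pos _ hσ2; linarith
  clear hl1 hl2 hl3 hl4 hs1 hs2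
  set s : Set ℝ := Set.Icc (0:ℝ) mbar with hsdef
  have h0 : (0:ℝ) ∈ s := ⟨le_refl 0, hmbar.le⟩
  have hGm : StrictMono (Gfun l1 l2 l3 l4 ρ) := Gfun_strictMono h1n h2p h3n h4p hρ0 hρ1
  -- key pointwise identity
  have hkey : ∀ m ∈ s,
      (X11 l1 l2 ρ q m (b m) (F m) * X22 l3 l4 m (b m) -
        X21 l3 l4 ρ q m (b m) (F m) * X12 l1 l2 m (b m)) * b' m
      = q * Real.exp (-q * m) *
          (Dden l1 l2 (b m - m) * Dden l3 l4 (b m - m) * Gfun l1 l2 l3 l4 ρ (b m - m)) := by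
    intro m hm
    have h1 := hode1 m hm
    have h2 := hode2 m hm
    have lc : (X11 l1 l2 ρ q m (b m) (F m) * X22 l3 l4 m (b m) -
        X21 l3 l4 ρ q m (b m) (F m) * X12 l1 l2 m (b m)) * b' m
        = R1 l1 l2 ρ q m (b m) * X22 l3 l4 m (b m) - R2 l3 l4 ρ q m (b m) * X12 l1 l2 m (b m) := by
      linear_combination X22 l3 l4 m (b m) * h1 - X12 l1 l2 m (b m) * h2
    rw [lc, key_id, Phi_eq ρ h1n h2p h3n h4p]
  -- part (a)
  have hb'0 : b' 0 = 0 := by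
    have hk := hkey 0 h0
    rw [sub_zero, hG0] at hk
    simp only [mul_zero] at hk
    have hd := hdet 0 h0
    rcases mul_eq_zero.mp hk with h | h
    · exact absurd h hd.ne'
    · exact h
  -- part (c) : invariance
  have hcontb : ContinuousOn b s := fun x hx => (hbd x hx).continuousWithinAt
  have hble : ∀ m ∈ s, b m - m ≤ b 0 := by
    by_contra hc
    push_neg at hc
    obtain ⟨m₁, hm₁, hgt⟩ := hc
    set S : Set ℝ := {t | t ∈ Set.Icc (0:ℝ) m₁ ∧ b t - t - b 0 ≤ 0} with hSdef
    have h0S : (0:ℝ) ∈ S := ⟨⟨le_refl 0, hm₁.1⟩, by simp⟩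
    have hSne : S.Nonempty := ⟨0, h0S⟩
    have hSbdd : BddAbove S := ⟨m₁, fun u hu => hu.1.2⟩
    have hsubIcc : Set.Icc (0:ℝ) m₁ ⊆ s := Set.Icc_subset_Icc le_rfl hm₁.2
    have hwcont : ContinuousOn (fun x => b x - x - b 0) (Set.Icc (0:ℝ) m₁) :=
      ((hcontb.mono hsubIcc).sub continuousOn_id).sub continuousOn_const
    have hSclosed : IsClosed S := by
      have hSeq : S = Set.Icc (0:ℝ) m₁ ∩ (fun x => b x - x - b 0) ⁻¹' (Set.Iic 0) := rfl
      rw [hSeq]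
      exact hwcont.preimage_isClosed_of_isClosed isClosed_Icc isClosed_Iic
    obtain ⟨t, htdef⟩ : ∃ t : ℝ, t = sSup S := ⟨_, rfl⟩
    have htS : t ∈ S := htdef ▸ hSclosed.csSup_mem hSne hSbdd
    have ht0 : 0 ≤ t := htS.1.1
    have htm₁ : t ≤ m₁ := htS.1.2
    have hts : t ∈ s := hsubIcc htS.1
    have htlt : t < m₁ := lt_of_le_of_ne htm₁ (by rintro rfl; linarith [htS.2])
    have hwpos : ∀ u ∈ Set.Ioc t m₁, 0 < b u - u - b 0 := by
      intro u hu
      by_contra hle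
      push_neg at hle
      have huS : u ∈ S := ⟨⟨le_trans ht0 hu.1.le, hu.2⟩, hle⟩
      exact absurd (htdef ▸ le_csSup hSbdd huS) (not_le.mpr hu.1)
    have hne : (nhdsWithin t (Set.Ioc t m₁)).NeBot := by
      rw [← mem_closure_iff_nhdsWithin_neBot, closure_Ioc htlt.ne]
      exact ⟨le_refl t, htlt.le⟩
    have hsub2 : Set.Ioc t m₁ ⊆ s \ {t} := by
      intro u hu
      exact ⟨⟨le_trans ht0 hu.1.le, le_trans hu.2 hm₁.2⟩, (ne_of_gt hu.1)⟩
    have hwt : b t - t - b 0 = 0 := by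
      refine le_antisymm htS.2 ?_
      have hcw : Filter.Tendsto (fun x => b x - x - b 0) (nhdsWithin t (Set.Ioc t m₁))
          (nhds (b t - t - b 0)) := by
        have : ContinuousWithinAt (fun x => b x - x - b 0) s t :=
          (((hcontb t hts).sub (continuousWithinAt_id)).sub continuousWithinAt_const)
        exact this.mono_left (nhdsWithin_mono t (fun u hu => (hsub2 hu).1))
      refine ge_of_tendsto hcw ?_
      filter_upwards [self_mem_nhdsWithin] with u hu
      exact (hwpos u hu).le
    have hGt : Gfun l1 l2 l3 l4 ρ (b t - t) = 0 := by
      rw [show b t - t = b 0 by linarith]; exact hG0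
    have hbt' : b' t = 0 := by
      have hk := hkey t hts
      rw [hGt] at hk
      simp only [mul_zero] at hk
      rcases mul_eq_zero.mp hk with h | h
      · exact absurd h (hdet t hts).ne'
      · exact h
    have hder : HasDerivWithinAt (fun x => b x - x - b 0) (-1 : ℝ) s t := by
      have := ((hbd t hts).sub (hasDerivWithinAt_id t s)).sub_const (b 0)
      simpa [hbt'] using this
    rw [hasDerivWithinAt_iff_tendsto_slope] at hder
    have hten : Filter.Tendsto (slope (fun x => b x - x - b 0) t)
        (nhdsWithin t (Set.Ioc t m₁)) (nhds (-1)) :=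
      hder.mono_left (nhdsWithin_mono t hsub2)
    have hev : ∀ᶠ u in nhdsWithin t (Set.Ioc t m₁),
        slope (fun x => b x - x - b 0) t u < 0 :=
      hten.eventually (gt_mem_nhds (by norm_num : (-1:ℝ) < 0))
    obtain ⟨u, hslope, hu⟩ := (hev.and self_mem_nhdsWithin).exists
    have hupos := hwpos u hu
    rw [slope_def_field] at hslope
    have hut : 0 < u - t := sub_pos.mpr hu.1
    rw [hwt] at hslope
    rw [div_neg_iff] at hslope
    rcases hslope with ⟨hn, hp⟩ | ⟨hp, hn⟩
    · linarith
    · linarith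
  have hparts : ∀ m ∈ s, b' m ≤ 0 := by
    intro m hm
    have hGle : Gfun l1 l2 l3 l4 ρ (b m - m) ≤ 0 := by
      have := hGm.monotone (hble m hm)
      rwa [hG0] at this
    have hk := hkey m hm
    have hd := hdet m hm
    have hD1 := Dden_pos h1n h2p (b m - m)
    have hD2 := Dden_pos h3n h4p (b m - m)
    have he := Real.exp_pos (-q * m)
    have h5 : Dden l1 l2 (b m - m) * Dden l3 l4 (b m - m) * Gfun l1 l2 l3 l4 ρ (b m - m) ≤ 0 :=
      mul_nonpos_of_nonneg_of_nonpos (mul_pos hD1 hD2).le hGle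
    have h6 : q * Real.exp (-q * m) *
        (Dden l1 l2 (b m - m) * Dden l3 l4 (b m - m) * Gfun l1 l2 l3 l4 ρ (b m - m)) ≤ 0 :=
      mul_nonpos_of_nonneg_of_nonpos (mul_pos hq he).le h5
    have h7 : (X11 l1 l2 ρ q m (b m) (F m) * X22 l3 l4 m (b m) -
        X21 l3 l4 ρ q m (b m) (F m) * X12 l1 l2 m (b m)) * b' m ≤ 0 := by
      rw [hk]; exact h6
    nlinarith [h7, hd]
  refine ⟨hb'0, ?_, hparts⟩
  -- part (b)
  have hbD : DifferentiableWithinAt ℝ b s 0 := (hbd 0 h0).differentiableWithinAt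
  have hFD : DifferentiableWithinAt ℝ F s 0 := (hFd 0 h0).differentiableWithinAt
  have hdetd : DifferentiableWithinAt ℝ (fun m => X11 l1 l2 ρ q m (b m) (F m) * X22 l3 l4 m (b m) -
      X21 l3 l4 ρ q m (b m) (F m) * X12 l1 l2 m (b m)) s 0 := by
    simp only [X11, X12, X21, X22]
    fun_prop
  have hP : HasDerivWithinAt (fun m => X11 l1 l2 ρ q m (b m) (F m) * X22 l3 l4 m (b m) -
      X21 l3 l4 ρ q m (b m) (F m) * X12 l1 l2 m (b m))
      (derivWithin (fun m => X11 l1 l2 ρ q m (b m) (F m) * X22 l3 l4 m (b m) -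
      X21 l3 l4 ρ q m (b m) (F m) * X12 l1 l2 m (b m)) s 0) s 0 := hdetd.hasDerivWithinAt
  have hL : HasDerivWithinAt (fun m =>
      (X11 l1 l2 ρ q m (b m) (F m) * X22 l3 l4 m (b m) -
        X21 l3 l4 ρ q m (b m) (F m) * X12 l1 l2 m (b m)) * b' m)
      ((derivWithin (fun m => X11 l1 l2 ρ q m (b m) (F m) * X22 l3 l4 m (b m) -
        X21 l3 l4 ρ q m (b m) (F m) * X12 l1 l2 m (b m)) s 0) * b' 0 +
        (X11 l1 l2 ρ q 0 (b 0) (F 0) * X22 l3 l4 0 (b 0) -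
          X21 l3 l4 ρ q 0 (b 0) (F 0) * X12 l1 l2 0 (b 0)) * b'' 0) s 0 := hP.mul (hbd2 0 h0)
  have hv : HasDerivWithinAt (fun m => b m - m) (b' 0 - 1) s 0 :=
    (hbd 0 h0).sub (hasDerivWithinAt_id 0 s)
  obtain ⟨gd, hgd, hgdpos⟩ : ∃ gd, HasDerivAt (Gfun l1 l2 l3 l4 ρ) gd (b 0) ∧ 0 < gd :=
    ⟨_, hasDerivAt_Gfun ρ h1n h2p h3n h4p (b 0), Gfun_deriv_pos h1n h2p h3n h4p hρ0 hρ1 (b 0)⟩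
  obtain ⟨d1, hd1⟩ : ∃ d, HasDerivAt (Dden l1 l2) d (b 0) := ⟨_, hasDerivAt_Dden l1 l2 (b 0)⟩
  obtain ⟨d2, hd2⟩ : ∃ d, HasDerivAt (Dden l3 l4) d (b 0) := ⟨_, hasDerivAt_Dden l3 l4 (b 0)⟩
  have hΨ : HasDerivAt (fun v => Dden l1 l2 v * Dden l3 l4 v * Gfun l1 l2 l3 l4 ρ v)
      (Dden l1 l2 (b 0) * Dden l3 l4 (b 0) * gd) (b 0) := by
    have h := ((hd1.mul hd2).mul hgd)
    rw [hG0, mul_zero, zero_add] at h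
    exact h
  have h00 : b 0 - (0:ℝ) = b 0 := sub_zero _
  have hcomp : HasDerivWithinAt
      (fun m => Dden l1 l2 (b m - m) * Dden l3 l4 (b m - m) * Gfun l1 l2 l3 l4 ρ (b m - m))
      ((Dden l1 l2 (b 0) * Dden l3 l4 (b 0) * gd) * (b' 0 - 1)) s 0 := by
    have h := hΨ.comp_hasDerivWithinAt_of_eq 0 hv (by simp)
    exact h
  have hE : HasDerivWithinAt (fun m => Real.exp (-q * m)) (-q * Real.exp (-q * 0)) s 0 :=
    (hasDerivAt_expc (-q) 0).hasDerivWithinAt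
  have hH : HasDerivWithinAt
      (fun m => q * Real.exp (-q * m) *
        (Dden l1 l2 (b m - m) * Dden l3 l4 (b m - m) * Gfun l1 l2 l3 l4 ρ (b m - m)))
      (q * ((-q * Real.exp (-q * 0)) *
          (Dden l1 l2 (b 0 - 0) * Dden l3 l4 (b 0 - 0) * Gfun l1 l2 l3 l4 ρ (b 0 - 0)) +
        Real.exp (-q * 0) * ((Dden l1 l2 (b 0) * Dden l3 l4 (b 0) * gd) * (b' 0 - 1)))) s 0 := by
    have h := (hE.mul hcomp).const_mul q
    simpa [mul_assoc] using h
  have hH' : HasDerivWithinAt (fun m =>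
      (X11 l1 l2 ρ q m (b m) (F m) * X22 l3 l4 m (b m) -
        X21 l3 l4 ρ q m (b m) (F m) * X12 l1 l2 m (b m)) * b' m)
      (q * ((-q * Real.exp (-q * 0)) *
          (Dden l1 l2 (b 0 - 0) * Dden l3 l4 (b 0 - 0) * Gfun l1 l2 l3 l4 ρ (b 0 - 0)) +
        Real.exp (-q * 0) * ((Dden l1 l2 (b 0) * Dden l3 l4 (b 0) * gd) * (b' 0 - 1)))) s 0 :=
    hH.congr (fun m hm => hkey m hm) (hkey 0 h0)
  have hU : UniqueDiffWithinAt ℝ s 0 := (uniqueDiffOn_Icc hmbar) 0 h0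
  have heq : (derivWithin (fun m => X11 l1 l2 ρ q m (b m) (F m) * X22 l3 l4 m (b m) -
        X21 l3 l4 ρ q m (b m) (F m) * X12 l1 l2 m (b m)) s 0) * b' 0 +
        (X11 l1 l2 ρ q 0 (b 0) (F 0) * X22 l3 l4 0 (b 0) -
          X21 l3 l4 ρ q 0 (b 0) (F 0) * X12 l1 l2 0 (b 0)) * b'' 0
      = q * ((-q * Real.exp (-q * 0)) *
          (Dden l1 l2 (b 0 - 0) * Dden l3 l4 (b 0 - 0) * Gfun l1 l2 l3 l4 ρ (b 0 - 0)) +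
        Real.exp (-q * 0) * ((Dden l1 l2 (b 0) * Dden l3 l4 (b 0) * gd) * (b' 0 - 1))) := by
    have e1 := hL.derivWithin hU
    have e2 := hH'.derivWithin hU
    rw [← e1, ← e2]
  rw [hb'0, sub_zero, hG0] at heq
  simp only [mul_zero, zero_mul, zero_add, add_zero, Real.exp_zero, one_mul, mul_one,
    zero_sub, mul_neg, neg_zero] at heq
  have hb''0 : b'' 0 < 0 := by
    have hd0 := hdet 0 h0
    have hD1 := Dden_pos h1n h2p (b 0)
    have hD2 := Dden_pos h3n h4p (b 0)
    have hpos : 0 < q * (Dden l1 l2 (b 0) * Dden l3 l4 (b 0) * gd) :=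
      mul_pos hq (mul_pos (mul_pos hD1 hD2) hgdpos)
    nlinarith [heq, hd0, hpos]
  have hcw : Filter.Tendsto b'' (nhdsWithin 0 s) (nhds (b'' 0)) := hb2c 0 h0
  have hev2 : {x | b'' x < 0} ∈ nhdsWithin 0 s := hcw (gt_mem_nhds hb''0)
  obtain ⟨ε', hε', hball⟩ := Metric.mem_nhdsWithin_iff.mp hev2
  refine ⟨min ε' mbar, lt_min hε' hmbar, min_le_right _ _, ?_⟩
  intro m hm
  refine hball ⟨?_, ?_⟩
  · rw [Metric.mem_ball, Real.dist_eq, sub_zero, abs_of_nonneg hm.1]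
    exact lt_of_lt_of_le hm.2 (min_le_left _ _)
  · exact ⟨hm.1, le_trans hm.2.le (min_le_right _ _)⟩
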